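/- For any dual quaternions â and b̂, the norm of their product satisfies ‖â b̂‖ ≤ √(3/2) · ‖â‖ · ‖b̂‖. -/

import Mathlib

/-- The norm `‖a_r + ε a_d‖ = √(‖a_r‖² + ‖a_d‖²)` of a dual quaternion. -/
noncomputable def dualQuatNorm (x : DualNumber (Quaternion ℝ)) : ℝ :=
  Real.sqrt (‖x.fst‖ ^ 2 + ‖x.snd‖ ^ 2)

/-- For any dual quaternions `â`, `b̂`, one has `‖â b̂‖ ≤ √(3/2) ‖â‖ ‖b̂‖`. -/
theorem dualQuatNorm_mul_le (a b : DualNumber (Quaternion ℝ)) :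
    dualQuatNorm (a * b) ≤ Real.sqrt (3 / 2) * dualQuatNorm a * dualQuatNorm b := by
  unfold dualQuatNorm
  set p := ‖a.fst‖; set q := ‖a.snd‖; set r := ‖b.fst‖; set s := ‖b.snd‖
  have hp : 0 ≤ p := norm_nonneg _
  have hq : 0 ≤ q := norm_nonneg _
  have hr : 0 ≤ r := norm_nonneg _
  have hs : 0 ≤ s := norm_nonneg _
  have h1 : ‖(a * b).fst‖ = p * r := by
    rw [TrivSqZeroExt.fst_mul, norm_mul]
  have h2 : ‖(a * b).snd‖ ≤ p * s + q * r := by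
    rw [TrivSqZeroExt.snd_mul]
    refine (norm_add_le _ _).trans ?_
    gcongr <;> simp [norm_smul, norm_mul, mul_comm] <;> exact le_rfl
  have key : ‖(a * b).fst‖ ^ 2 + ‖(a * b).snd‖ ^ 2 ≤
      3 / 2 * ((p ^ 2 + q ^ 2) * (r ^ 2 + s ^ 2)) := by
    rw [h1]
    have h2' : ‖(a * b).snd‖ ^ 2 ≤ (p * s + q * r) ^ 2 := by
      apply sq_le_sq' _ h2
      nlinarith [norm_nonneg (a*b).snd]
    nlinarith [sq_nonneg (p*s - q*r), sq_nonneg (p*r - q*s), sq_nonneg (q*s), sq_nonneg (p*r)]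
  calc Real.sqrt (‖(a * b).fst‖ ^ 2 + ‖(a * b).snd‖ ^ 2)
      ≤ Real.sqrt (3 / 2 * ((p ^ 2 + q ^ 2) * (r ^ 2 + s ^ 2))) := Real.sqrt_le_sqrt key
    _ = Real.sqrt (3 / 2) * dualQuatNorm a * dualQuatNorm b := by
        rw [Real.sqrt_mul (by norm_num), Real.sqrt_mul (by positivity)]; unfold dualQuatNorm; ring
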